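/- Every connected labeled graph of finite size at least 2 is decomposable: it has two distinct elements (vertex labels or labeled edges) such that removing either one, together with any vertex thereby left isolated, yields a connected labeled graph of size one less. -/

import Mathlib

/-- A labeled graph over vertex-label alphabet `SV` and edge-label alphabet `SE`:
a vertex set, a set of vertex labels, and a set of labeled edges with no loops. -/
structure LabeledGraph (V SV SE : Type*) where
  verts : Set V
  labels : Set (V × SV)
  edges : Set (V × V × SE)
  labels_sub : ∀ ⦃p : V × SV⦄, p ∈ labels → p.1 ∈ verts
  edges_sub : ∀ ⦃q : V × V × SE⦄, q ∈ edges → q.1 ∈ verts ∧ q.2.1 ∈ verts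
  no_loops : ∀ ⦃q : V × V × SE⦄, q ∈ edges → q.1 ≠ q.2.1

/-- An element of a labeled graph: a vertex label or a labeled edge. -/
abbrev GraphElement (V SV SE : Type*) := (V × SV) ⊕ (V × V × SE)

namespace LabeledGraph

variable {V SV SE : Type*}

/-- Adjacency, ignoring edge directions. -/
def Adj (G : LabeledGraph V SV SE) (x y : V) : Prop :=
  ∃ l, (x, y, l) ∈ G.edges ∨ (y, x, l) ∈ G.edges

/-- The size of a labeled graph: number of vertex labels plus number of labeled edges. -/
noncomputable def size (G : LabeledGraph V SV SE) : ℕ := G.labels.ncard + G.edges.ncard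

/-- Membership of an element in a labeled graph. -/
def HasElement (G : LabeledGraph V SV SE) : GraphElement V SV SE → Prop
  | Sum.inl p => p ∈ G.labels
  | Sum.inr q => q ∈ G.edges

/-- A vertex is occupied (not isolated) w.r.t. given label and edge sets if it
carries some vertex label or is incident to some labeled edge. -/
def Occupied (labels : Set (V × SV)) (edges : Set (V × V × SE)) (x : V) : Prop :=
  (∃ l, (x, l) ∈ labels) ∨ (∃ u l, (x, u, l) ∈ edges ∨ (u, x, l) ∈ edges)

/-- The vertex labels remaining after deleting an element. -/
def delLabels (G : LabeledGraph V SV SE) : GraphElement V SV SE → Set (V × SV)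
  | Sum.inl p => G.labels \ {p}
  | Sum.inr _ => G.labels

/-- The labeled edges remaining after deleting an element. -/
def delEdges (G : LabeledGraph V SV SE) : GraphElement V SV SE → Set (V × V × SE)
  | Sum.inl _ => G.edges
  | Sum.inr q => G.edges \ {q}

lemma delLabels_subset (G : LabeledGraph V SV SE) (e : GraphElement V SV SE) :
    G.delLabels e ⊆ G.labels := by
  cases e with
  | inl p => exact Set.diff_subset
  | inr q => exact subset_rfl

lemma delEdges_subset (G : LabeledGraph V SV SE) (e : GraphElement V SV SE) :
    G.delEdges e ⊆ G.edges := by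
  cases e with
  | inl p => exact subset_rfl
  | inr q => exact Set.diff_subset

/-- Removing an element from a labeled graph: delete that vertex label or labeled
edge, and additionally delete any vertex thereby left isolated. -/
def removeElement (G : LabeledGraph V SV SE) (e : GraphElement V SV SE) :
    LabeledGraph V SV SE where
  verts := {x ∈ G.verts |
    Occupied (G.delLabels e) (G.delEdges e) x ∨ ¬ Occupied G.labels G.edges x}
  labels := G.delLabels e
  edges := G.delEdges e
  labels_sub := fun p hp =>
    ⟨G.labels_sub (G.delLabels_subset e hp), Or.inl (Or.inl ⟨p.2, hp⟩)⟩
  edges_sub := fun q hq =>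
    ⟨⟨(G.edges_sub (G.delEdges_subset e hq)).1,
        Or.inl (Or.inr ⟨q.2.1, q.2.2, Or.inl hq⟩)⟩,
      ⟨(G.edges_sub (G.delEdges_subset e hq)).2,
        Or.inl (Or.inr ⟨q.1, q.2.2, Or.inr hq⟩)⟩⟩
  no_loops := fun q hq => G.no_loops (G.delEdges_subset e hq)

/-- Connectivity of a (non-pivoted) labeled graph: every pair of its vertices is
joined by a path of edges, ignoring edge directions. -/
def ConnectedGraph (G : LabeledGraph V SV SE) : Prop :=
  ∀ x ∈ G.verts, ∀ y ∈ G.verts, Relation.ReflTransGen G.Adj x y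

/-- A leaf vertex: incident to exactly one labeled edge. -/
def IsLeafVertex (G : LabeledGraph V SV SE) (x : V) : Prop :=
  ∃! q : V × V × SE, q ∈ G.edges ∧ (q.1 = x ∨ q.2.1 = x)

/-- A cycle in the underlying undirected multigraph: a closed walk
`ws` using pairwise distinct labeled edges `es`. -/
def IsCycle (G : LabeledGraph V SV SE) (es : List (V × V × SE)) (ws : List V) : Prop :=
  es ≠ [] ∧ es.Nodup ∧
  ws.length = es.length + 1 ∧ ws.head? = ws.getLast? ∧
  ∀ i q, es[i]? = some q → q ∈ G.edges ∧
    ∃ u w, ws[i]? = some u ∧ ws[i+1]? = some w ∧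
      ((q.1 = u ∧ q.2.1 = w) ∨ (q.1 = w ∧ q.2.1 = u))

end LabeledGraph

/-- A pivoted graph: a labeled graph with a distinguished vertex, the pivot. -/
structure PivotedGraph (V SV SE : Type*) extends LabeledGraph V SV SE where
  pivot : V
  pivot_mem : pivot ∈ verts

/-- Pivoted subgraph isomorphism `P₁ ⊆_f P₂`: an injective map on vertices preserving
vertex labels and labeled edges and sending pivot to pivot. -/
def PSubIso {V₁ V₂ SV SE : Type*}
    (P₁ : PivotedGraph V₁ SV SE) (P₂ : PivotedGraph V₂ SV SE) : Prop :=
  ∃ f : V₁ → V₂,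
    Set.MapsTo f P₁.verts P₂.verts ∧
    Set.InjOn f P₁.verts ∧
    (∀ ⦃x : V₁⦄ ⦃l : SV⦄, (x, l) ∈ P₁.labels → (f x, l) ∈ P₂.labels) ∧
    (∀ ⦃x y : V₁⦄ ⦃l : SE⦄, (x, y, l) ∈ P₁.edges → (f x, f y, l) ∈ P₂.edges) ∧
    f P₁.pivot = P₂.pivot

/-- The match set `M_G(P)`: all vertices `v` of `G` such that `P ⊆_f ⟨G, v⟩`. -/
def matchSet {V V' SV SE : Type*} (G : LabeledGraph V SV SE)
    (P : PivotedGraph V' SV SE) : Set V :=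
  {x | ∃ hx : x ∈ G.verts, PSubIso P ⟨G, x, hx⟩}

namespace PivotedGraph

variable {V SV SE : Type*}

/-- A pivoted graph is connected if every vertex is joined to the pivot by a path
of edges, ignoring edge directions. (A neighborhood pattern is a connected
pivoted graph.) -/
def Connected (P : PivotedGraph V SV SE) : Prop :=
  ∀ x ∈ P.verts, Relation.ReflTransGen P.toLabeledGraph.Adj x P.pivot

/-- Removing the element `e` from `P` yields a connected pivoted graph (with the
same pivot). -/
def ConnectedAfterRemove (P : PivotedGraph V SV SE) (e : GraphElement V SV SE) : Prop :=
  P.pivot ∈ (P.toLabeledGraph.removeElement e).verts ∧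
  ∀ x ∈ (P.toLabeledGraph.removeElement e).verts,
    Relation.ReflTransGen (P.toLabeledGraph.removeElement e).Adj x P.pivot

/-- A neighborhood pattern is decomposable if it has two distinct elements such that
removing either one yields a connected pivoted graph. -/
def Decomposable (P : PivotedGraph V SV SE) : Prop :=
  ∃ e₁ e₂ : GraphElement V SV SE, e₁ ≠ e₂ ∧
    P.toLabeledGraph.HasElement e₁ ∧ P.toLabeledGraph.HasElement e₂ ∧
    P.ConnectedAfterRemove e₁ ∧ P.ConnectedAfterRemove e₂

/-- A path pattern: the edges, with directions ignored, form a simple path (given by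
the list of vertices `vs`) having the pivot as one endpoint, with at most one vertex
label, which (if present) is on the other endpoint of the path. -/
def IsPathPattern (P : PivotedGraph V SV SE) : Prop :=
  ∃ vs : List V,
    vs ≠ [] ∧ vs.Nodup ∧ vs.head? = some P.pivot ∧
    P.verts = {x | x ∈ vs} ∧
    (∀ q ∈ P.edges, ∃ i u w, vs[i]? = some u ∧ vs[i + 1]? = some w ∧
      ((q.1 = u ∧ q.2.1 = w) ∨ (q.1 = w ∧ q.2.1 = u))) ∧
    (∀ i u w, vs[i]? = some u → vs[i + 1]? = some w →
      ∃! q : V × V × SE, q ∈ P.edges ∧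
        ((q.1 = u ∧ q.2.1 = w) ∨ (q.1 = w ∧ q.2.1 = u))) ∧
    P.labels.Subsingleton ∧
    (∀ p ∈ P.labels, vs.getLast? = some p.1)

end PivotedGraph

/-- An injective match of a labeled graph pattern `P` in a labeled graph `G`:
an injective map from the vertices of `P` to those of `G` carrying vertex labels
to vertex labels and labeled edges to labeled edges. -/
def MatchOn {V V' SV SE : Type*} (P : LabeledGraph V' SV SE) (G : LabeledGraph V SV SE)
    (f : P.verts → V) : Prop :=
  (∀ x, f x ∈ G.verts) ∧ Function.Injective f ∧
  (∀ ⦃p : V' × SV⦄ (hp : p ∈ P.labels), (f ⟨p.1, P.labels_sub hp⟩, p.2) ∈ G.labels) ∧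
  (∀ ⦃q : V' × V' × SE⦄ (hq : q ∈ P.edges),
    (f ⟨q.1, (P.edges_sub hq).1⟩, f ⟨q.2.1, (P.edges_sub hq).2⟩, q.2.2) ∈ G.edges)

section DecompAux

open Relation SimpleGraph

namespace LabeledGraph

variable {V SV SE : Type*}

/-- Adjacency via a given edge set. -/
def AdjOn (S : Set (V × V × SE)) (x y : V) : Prop :=
  ∃ l, (x, y, l) ∈ S ∨ (y, x, l) ∈ S

lemma adjOn_symm {S : Set (V × V × SE)} : Symmetric (AdjOn S) :=
  fun _ _ ⟨l, h⟩ => ⟨l, h.symm⟩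

/-- A triple is incident to a vertex. -/
def IncV (e : V × V × SE) (x : V) : Prop := e.1 = x ∨ e.2.1 = x

/-- `e` is the unique edge incident to `x`. -/
def PendAt (G : LabeledGraph V SV SE) (x : V) (e : V × V × SE) : Prop :=
  e ∈ G.edges ∧ IncV e x ∧ ∀ f ∈ G.edges, IncV f x → f = e

/-- The endpoints of `e` stay connected after removing `e`. -/
def NonBridge (G : LabeledGraph V SV SE) (e : V × V × SE) : Prop :=
  Relation.ReflTransGen (AdjOn (G.edges \ {e})) e.1 e.2.1

/-- The simple graph underlying an edge set. -/
def sgOn (S : Set (V × V × SE)) : SimpleGraph V where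
  Adj x y := x ≠ y ∧ AdjOn S x y
  symm := ⟨fun _ _ ⟨h, ha⟩ => ⟨h.symm, adjOn_symm ha⟩⟩
  loopless := ⟨fun _ ⟨h, _⟩ => h rfl⟩

lemma sgOn_adj {S : Set (V × V × SE)} {x y : V} :
    (sgOn S).Adj x y ↔ x ≠ y ∧ AdjOn S x y := Iff.rfl

lemma adj_sgOn (G : LabeledGraph V SV SE) {S : Set (V × V × SE)} (hS : S ⊆ G.edges)
    {x y : V} (h : AdjOn S x y) : (sgOn S).Adj x y := by
  obtain ⟨l, h | h⟩ := h
  · exact ⟨G.no_loops (hS h), l, Or.inl h⟩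
  · exact ⟨(G.no_loops (hS h)).symm, l, Or.inr h⟩

lemma rtg_walk (G : LabeledGraph V SV SE) {S : Set (V × V × SE)} (hS : S ⊆ G.edges)
    {x y : V} (h : Relation.ReflTransGen (AdjOn S) x y) : Nonempty ((sgOn S).Walk x y) := by
  induction h with
  | refl => exact ⟨.nil⟩
  | tail _ hadj ih => exact ⟨ih.some.concat (adj_sgOn G hS hadj)⟩

/-- A walk in `sgOn S` whose support avoids a vertex `u` incident to `t`
yields a connection avoiding `t`. -/
lemma walk_rtg_avoid (G : LabeledGraph V SV SE) {S : Set (V × V × SE)} (hS : S ⊆ G.edges)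
    (t : V × V × SE) (u : V) (hu : IncV t u)
    {a b : V} (q : (sgOn S).Walk a b) (hq : ∀ x ∈ q.support, x ≠ u) :
    Relation.ReflTransGen (AdjOn (G.edges \ {t})) a b := by
  induction q with
  | nil => exact .refl
  | @cons a c b h r ih =>
    have ha : a ≠ u := hq a (by simp [Walk.support_cons])
    have hc : c ≠ u := hq c (by
      rw [Walk.support_cons]
      exact List.mem_cons_of_mem _ r.start_mem_support)
    refine Relation.ReflTransGen.head ?_ (ih fun x hx => hq x (by
      rw [Walk.support_cons]; exact List.mem_cons_of_mem _ hx))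
    obtain ⟨hne, l, hm | hm⟩ := h
    · refine ⟨l, Or.inl ⟨hS hm, ?_⟩⟩
      intro hmem
      rw [Set.mem_singleton_iff] at hmem
      rcases hu with h1 | h1 <;> rw [← hmem] at h1
      · exact ha h1
      · exact hc h1
    · refine ⟨l, Or.inr ⟨hS hm, ?_⟩⟩
      intro hmem
      rw [Set.mem_singleton_iff] at hmem
      rcases hu with h1 | h1 <;> rw [← hmem] at h1
      · exact hc h1
      · exact ha h1

/-- If the endpoints of `e` stay connected avoiding `e`, every connection can avoid `e`. -/
lemma rtg_avoid (G : LabeledGraph V SV SE) {e : V × V × SE}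
    (hnb : Relation.ReflTransGen (AdjOn (G.edges \ {e})) e.1 e.2.1)
    {x y : V} (h : Relation.ReflTransGen (AdjOn G.edges) x y) :
    Relation.ReflTransGen (AdjOn (G.edges \ {e})) x y := by
  induction h with
  | refl => exact .refl
  | @tail b c _ hadj ih =>
    refine ih.trans ?_
    obtain ⟨l, hm | hm⟩ := hadj
    · by_cases hbe : (b, c, l) = e
      · subst hbe; exact hnb
      · exact Relation.ReflTransGen.single ⟨l, Or.inl ⟨hm, by simpa using hbe⟩⟩
    · by_cases hbe : (c, b, l) = e
      · subst hbe
        exact (Std.Symm.symm (self := @Relation.ReflTransGen.stdSymm _ _ ⟨fun _ _ h => adjOn_symm h⟩) _ _) hnb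
      · exact Relation.ReflTransGen.single ⟨l, Or.inr ⟨hm, by simpa using hbe⟩⟩

lemma good_label (G : LabeledGraph V SV SE) (hconn : G.ConnectedGraph) (p : V × SV) :
    (G.removeElement (Sum.inl p)).ConnectedGraph :=
  fun x hx y hy => hconn x hx.1 y hy.1

lemma good_nonbridge (G : LabeledGraph V SV SE) (hconn : G.ConnectedGraph)
    {e : V × V × SE} (hnb : G.NonBridge e) :
    (G.removeElement (Sum.inr e)).ConnectedGraph :=
  fun x hx y hy => rtg_avoid G hnb (hconn x hx.1 y hy.1)

open Classical in
lemma pendant_map (G : LabeledGraph V SV SE) {u : V} {e : V × V × SE}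
    (hp : G.PendAt u e) (w : V) (hw : w ≠ u)
    (hew : (e.1 = u ∧ e.2.1 = w) ∨ (e.1 = w ∧ e.2.1 = u)) {x y : V}
    (h : Relation.ReflTransGen (AdjOn G.edges) x y) :
    Relation.ReflTransGen (AdjOn (G.edges \ {e}))
      (if x = u then w else x) (if y = u then w else y) := by
  obtain ⟨hem, _, huniq⟩ := hp
  induction h with
  | refl => exact .refl
  | @tail b c _ hadj ih =>
    refine ih.trans ?_
    have step : ∀ (b c : V) (l : SE), (b, c, l) ∈ G.edges →
        Relation.ReflTransGen (AdjOn (G.edges \ {e}))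
          (if b = u then w else b) (if c = u then w else c) := by
      intro b c l hm
      by_cases hbe : (b, c, l) = e
      · rcases hew with ⟨h1, h2⟩ | ⟨h1, h2⟩
        · rw [← hbe] at h1 h2
          simp only at h1 h2
          subst h1; subst h2
          rw [if_pos rfl, if_neg hw]
        · rw [← hbe] at h1 h2
          simp only at h1 h2
          subst h1; subst h2
          rw [if_neg hw, if_pos rfl]
      · have hb : b ≠ u := by
          intro hb; exact hbe (huniq _ hm (Or.inl hb))
        have hc : c ≠ u := by
          intro hc; exact hbe (huniq _ hm (Or.inr hc))
        rw [if_neg hb, if_neg hc]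
        exact Relation.ReflTransGen.single ⟨l, Or.inl ⟨hm, by simpa using hbe⟩⟩
    obtain ⟨l, hm | hm⟩ := hadj
    · exact step b c l hm
    · exact (Std.Symm.symm (self := @Relation.ReflTransGen.stdSymm _ _ ⟨fun _ _ h => adjOn_symm h⟩) _ _) (step c b l hm)

lemma good_pendant (G : LabeledGraph V SV SE) (hconn : G.ConnectedGraph)
    {u : V} {e : V × V × SE} (hp : G.PendAt u e) (hnl : ∀ l, (u, l) ∉ G.labels) :
    (G.removeElement (Sum.inr e)).ConnectedGraph := by
  obtain ⟨hem, hinc, huniq⟩ := hp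
  have hne : e.1 ≠ e.2.1 := G.no_loops hem
  obtain ⟨w, hw, hew⟩ : ∃ w, w ≠ u ∧ ((e.1 = u ∧ e.2.1 = w) ∨ (e.1 = w ∧ e.2.1 = u)) := by
    rcases hinc with h | h
    · exact ⟨e.2.1, fun hh => hne (h.trans hh.symm), Or.inl ⟨h, rfl⟩⟩
    · exact ⟨e.1, fun hh => hne (hh.trans h.symm), Or.inr ⟨rfl, h⟩⟩
  have hu_not : u ∉ (G.removeElement (Sum.inr e)).verts := by
    rintro ⟨hv, hocc | hnocc⟩
    · rcases hocc with ⟨l, hl⟩ | ⟨z, l, hz | hz⟩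
      · exact hnl l hl
      · exact hz.2 (by
          rw [Set.mem_singleton_iff]
          exact huniq _ hz.1 (Or.inl rfl))
      · exact hz.2 (by
          rw [Set.mem_singleton_iff]
          exact huniq _ hz.1 (Or.inr rfl))
    · refine hnocc (Or.inr ?_)
      rcases hinc with h | h
      · exact ⟨e.2.1, e.2.2, Or.inl (by rw [← h]; exact hem)⟩
      · exact ⟨e.1, e.2.2, Or.inr (by rw [← h]; exact hem)⟩
  intro x hx y hy
  have hxu : x ≠ u := fun h => hu_not (h ▸ hx)
  have hyu : y ≠ u := fun h => hu_not (h ▸ hy)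
  have hmap := pendant_map G ⟨hem, hinc, huniq⟩ w hw hew (hconn x hx.1 y hy.1)
  rw [if_neg hxu, if_neg hyu] at hmap
  exact hmap

lemma size_remove (G : LabeledGraph V SV SE) (hL : G.labels.Finite) (hE : G.edges.Finite)
    {e : GraphElement V SV SE} (he : G.HasElement e) :
    (G.removeElement e).size + 1 = G.size := by
  cases e with
  | inl p =>
    have hp : p ∈ G.labels := he
    have h := Set.ncard_diff_singleton_add_one hp hL
    show ((G.labels \ {p}).ncard + G.edges.ncard) + 1 = G.labels.ncard + G.edges.ncard
    omega
  | inr q =>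
    have hq : q ∈ G.edges := he
    have h := Set.ncard_diff_singleton_add_one hq hE
    show (G.labels.ncard + (G.edges \ {q}).ncard) + 1 = G.labels.ncard + G.edges.ncard
    omega

/-- Given one non-bridge, there is a second, distinct one. -/
lemma nonbridge_pair (G : LabeledGraph V SV SE) {e : V × V × SE}
    (he : e ∈ G.edges) (hnb : G.NonBridge e) :
    ∃ f ∈ G.edges, f ≠ e ∧ G.NonBridge f := by
  classical
  obtain ⟨u, v, le⟩ := e
  set S : Set (V × V × SE) := G.edges \ {(u, v, le)} with hSdef
  have hSsub : S ⊆ G.edges := Set.diff_subset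
  have hnb' : Relation.ReflTransGen (AdjOn S) u v := hnb
  obtain ⟨w⟩ := rtg_walk G hSsub hnb'
  obtain ⟨q, hq⟩ : ∃ q : (sgOn S).Walk u v, q.IsPath := ⟨w.bypass, Walk.bypass_isPath w⟩
  have huv : u ≠ v := G.no_loops he
  cases q with
  | nil => exact absurd rfl huv
  | @cons _ z _ h1 r =>
    have hqpath := (Walk.cons_isPath_iff h1 r).mp hq
    obtain ⟨hnez, l, hm | hm⟩ := h1
    · -- t = (u, z, l) ∈ S
      refine ⟨(u, z, l), hSsub hm, hm.2, ?_⟩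
      show Relation.ReflTransGen (AdjOn (G.edges \ {(u, z, l)})) u z
      have step1 : AdjOn (G.edges \ {(u, z, l)}) u v :=
        ⟨le, Or.inl ⟨he, fun hs => hm.2 (by rw [Set.mem_singleton_iff] at hs ⊢; exact hs.symm)⟩⟩
      have step2 : Relation.ReflTransGen (AdjOn (G.edges \ {(u, z, l)})) v z := by
        refine walk_rtg_avoid G hSsub (u, z, l) u (Or.inl rfl) r.reverse ?_
        intro x hx hxu
        rw [Walk.support_reverse, List.mem_reverse] at hx
        exact hqpath.2 (hxu ▸ hx)
      exact (Relation.ReflTransGen.single step1).trans step2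
    · refine ⟨(z, u, l), hSsub hm, hm.2, ?_⟩
      show Relation.ReflTransGen (AdjOn (G.edges \ {(z, u, l)})) z u
      have step1 : AdjOn (G.edges \ {(z, u, l)}) u v :=
        ⟨le, Or.inl ⟨he, fun hs => hm.2 (by rw [Set.mem_singleton_iff] at hs ⊢; exact hs.symm)⟩⟩
      have step2 : Relation.ReflTransGen (AdjOn (G.edges \ {(z, u, l)})) v z := by
        refine walk_rtg_avoid G hSsub (z, u, l) u (Or.inr rfl) r.reverse ?_
        intro x hx hxu
        rw [Walk.support_reverse, List.mem_reverse] at hx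
        exact hqpath.2 (hxu ▸ hx)
      exact (Std.Symm.symm (self := @Relation.ReflTransGen.stdSymm _ _ ⟨fun _ _ h => adjOn_symm h⟩) _ _)
        ((Relation.ReflTransGen.single step1).trans step2)

/-- Endpoint of a maximum-length path: either some non-bridge exists, or the
endpoint is a pendant vertex. -/
lemma endpoint_lemma (G : LabeledGraph V SV SE)
    {x0 xk : V} (p : (sgOn G.edges).Walk x0 xk) (hp : p.IsPath) (hlen : 1 ≤ p.length)
    (hmax : ∀ {a b : V} (q : (sgOn G.edges).Walk a b), q.IsPath → q.length ≤ p.length) :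
    (∃ e ∈ G.edges, G.NonBridge e) ∨ (∃ t, G.PendAt x0 t) := by
  classical
  cases p with
  | nil => simp at hlen
  | @cons _ x1 _ h1 q1 =>
    have hq1 := (Walk.cons_isPath_iff h1 q1).mp hp
    by_cases hpend : ∀ f ∈ G.edges, IncV f x0 → ∀ g ∈ G.edges, IncV g x0 → f = g
    · right
      obtain ⟨hne1, l1, hm | hm⟩ := h1
      · exact ⟨(x0, x1, l1), hm, Or.inl rfl, fun f hf hfi => hpend f hf hfi _ hm (Or.inl rfl)⟩
      · exact ⟨(x1, x0, l1), hm, Or.inr rfl, fun f hf hfi => hpend f hf hfi _ hm (Or.inr rfl)⟩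
    · left
      push_neg at hpend
      obtain ⟨f, hf, hfi, g, hg, hgi, hfg⟩ := hpend
      have other : ∀ f, f ∈ G.edges → IncV f x0 → ∃ w, w ≠ x0 ∧ (sgOn G.edges).Adj x0 w ∧
          ((f.1 = x0 ∧ f.2.1 = w) ∨ (f.1 = w ∧ f.2.1 = x0)) := by
        intro f hf hfi
        have hnl := G.no_loops hf
        rcases hfi with h | h
        · refine ⟨f.2.1, fun hh => hnl (h.trans hh.symm), ?_, Or.inl ⟨h, rfl⟩⟩
          exact ⟨fun hh => hnl (h.trans hh), f.2.2, Or.inl (by rw [← h]; exact hf)⟩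
        · refine ⟨f.1, fun hh => hnl (hh.trans h.symm), ?_, Or.inr ⟨rfl, h⟩⟩
          exact ⟨fun hh => hnl (hh.symm.trans h.symm), f.2.2, Or.inr (by rw [← h]; exact hf)⟩
      obtain ⟨wf, hwf0, hadjf, hPf⟩ := other f hf hfi
      obtain ⟨wg, hwg0, hadjg, hPg⟩ := other g hg hgi
      have hsup : ∀ w, w ≠ x0 → (sgOn G.edges).Adj x0 w →
          w ∈ q1.support := by
        intro w hwne hadj
        by_contra hns
        have hns' : w ∉ (Walk.cons h1 q1).support := by
          rw [Walk.support_cons]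
          simp only [List.mem_cons, not_or]
          exact ⟨hwne, hns⟩
        have hpath' : (Walk.cons hadj.symm (Walk.cons h1 q1)).IsPath :=
          (Walk.cons_isPath_iff _ _).mpr ⟨hp, hns'⟩
        have := hmax _ hpath'
        simp [Walk.length_cons] at this
      have hwfs := hsup wf hwf0 hadjf
      have hwgs := hsup wg hwg0 hadjg
      have hstep : AdjOn (G.edges \ {g}) x0 wf := by
        have hfmem : f ∈ G.edges \ {g} := ⟨hf, by simpa using hfg⟩
        rcases hPf with ⟨h1', h2'⟩ | ⟨h1', h2'⟩
        · exact ⟨f.2.2, Or.inl (by rw [← h1', ← h2']; exact hfmem)⟩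
        · exact ⟨f.2.2, Or.inr (by rw [← h1', ← h2']; exact hfmem)⟩
      have havoid : ∀ {w : V} (hw : w ∈ q1.support),
          Relation.ReflTransGen (AdjOn (G.edges \ {g})) x1 w := by
        intro w hw
        refine walk_rtg_avoid G (subset_refl _) g x0 hgi (q1.takeUntil w hw) ?_
        intro x hx hxu
        exact hq1.2 (hxu ▸ Walk.support_takeUntil_subset q1 hw hx)
      have hrtg : Relation.ReflTransGen (AdjOn (G.edges \ {g})) x0 wg :=
        (Relation.ReflTransGen.single hstep).trans
          (((Std.Symm.symm (self := @Relation.ReflTransGen.stdSymm _ _ ⟨fun _ _ h => adjOn_symm h⟩) _ _) (havoid hwfs)).trans (havoid hwgs))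
      refine ⟨g, hg, ?_⟩
      rcases hPg with ⟨h1', h2'⟩ | ⟨h1', h2'⟩
      · rw [NonBridge, h1', h2']; exact hrtg
      · rw [NonBridge, h1', h2']
        exact (Std.Symm.symm (self := @Relation.ReflTransGen.stdSymm _ _ ⟨fun _ _ h => adjOn_symm h⟩) _ _) hrtg

/-- The key structure lemma: a connected graph with finitely many edges, at least one,
has a non-bridge edge or two distinct pendant vertices (with distinct pendant edges
when there are at least two edges). -/
lemma exists_structure (G : LabeledGraph V SV SE) (hE : G.edges.Finite)
    (hne : G.edges.Nonempty) (hconn : G.ConnectedGraph) :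
    (∃ e ∈ G.edges, G.NonBridge e) ∨
      ∃ u v eu ev, u ≠ v ∧ G.PendAt u eu ∧ G.PendAt v ev ∧
        (2 ≤ G.edges.ncard → eu ≠ ev) := by
  classical
  obtain ⟨e0, he0⟩ := hne
  set VS : Set V := (fun q => q.1) '' G.edges ∪ (fun q => q.2.1) '' G.edges with hVS
  have hVSfin : VS.Finite := (hE.image _).union (hE.image _)
  have hmemVS : ∀ {y z : V}, (sgOn G.edges).Adj y z → y ∈ VS := by
    rintro y z ⟨_, l, hm | hm⟩
    · exact Or.inl ⟨(y, z, l), hm, rfl⟩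
    · exact Or.inr ⟨(z, y, l), hm, rfl⟩
  have hsupVS : ∀ {a b : V} (q : (sgOn G.edges).Walk a b),
      1 ≤ q.length → ∀ x ∈ q.support, x ∈ VS := by
    intro a b q
    induction q with
    | nil => simp
    | @cons a c b h r ih =>
      intro _ x hx
      rw [Walk.support_cons] at hx
      rcases List.mem_cons.mp hx with rfl | hx
      · exact hmemVS h
      · cases r with
        | nil =>
          simp only [Walk.support_nil, List.mem_singleton] at hx
          subst hx
          exact hmemVS h.symm
        | @cons _ d _ h' r' => exact ih (by simp) x hx
  set L : Set ℕ := {n | ∃ (a b : V) (q : (sgOn G.edges).Walk a b), q.IsPath ∧ q.length = n}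
    with hLdef
  have h1L : 1 ∈ L := by
    have hadj : (sgOn G.edges).Adj e0.1 e0.2.1 :=
      ⟨G.no_loops he0, e0.2.2, Or.inl he0⟩
    refine ⟨_, _, Walk.cons hadj Walk.nil, ?_, rfl⟩
    rw [Walk.cons_isPath_iff]
    exact ⟨Walk.IsPath.nil, by simpa using G.no_loops he0⟩
  have hbdd : BddAbove L := by
    refine ⟨hVSfin.toFinset.card, fun n hn => ?_⟩
    obtain ⟨a, b, q, hq, rfl⟩ := hn
    rcases Nat.eq_zero_or_pos q.length with h | h
    · omega
    · have hsub : q.support.toFinset ⊆ hVSfin.toFinset := by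
        intro x hx
        rw [Set.Finite.mem_toFinset]
        exact hsupVS q h x (List.mem_toFinset.mp hx)
      have hcard := Finset.card_le_card hsub
      rw [List.toFinset_card_of_nodup hq.support_nodup, Walk.length_support] at hcard
      omega
  have hkL : sSup L ∈ L := Nat.sSup_mem ⟨1, h1L⟩ hbdd
  obtain ⟨x0, xk, p, hp, hplen⟩ := hkL
  have hk1 : 1 ≤ p.length := hplen ▸ le_csSup hbdd h1L
  have hmax : ∀ {a b : V} (q : (sgOn G.edges).Walk a b), q.IsPath → q.length ≤ p.length := by
    intro a b q hq
    rw [hplen]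
    exact le_csSup hbdd ⟨a, b, q, hq, rfl⟩
  rcases endpoint_lemma G p hp hk1 hmax with hnb | ⟨eu, hpu⟩
  · exact Or.inl hnb
  have hmaxr : ∀ {a b : V} (q : (sgOn G.edges).Walk a b), q.IsPath → q.length ≤ p.reverse.length := by
    intro a b q hq
    rw [Walk.length_reverse]
    exact hmax q hq
  rcases endpoint_lemma G p.reverse hp.reverse (by rw [Walk.length_reverse]; exact hk1) hmaxr
    with hnb | ⟨ev, hpv⟩
  · exact Or.inl hnb
  right
  have hx0k : x0 ≠ xk := by
    intro h
    subst h
    cases p with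
    | nil => simp at hk1
    | cons h' r => exact ((Walk.cons_isPath_iff h' r).mp hp).2 r.end_mem_support
  refine ⟨x0, xk, eu, ev, hx0k, hpu, hpv, ?_⟩
  intro h2 heq
  subst heq
  obtain ⟨heu, hiu, huu⟩ := hpu
  obtain ⟨_, hiv, hvv⟩ := hpv
  have hends : (eu.1 = x0 ∧ eu.2.1 = xk) ∨ (eu.1 = xk ∧ eu.2.1 = x0) := by
    have hnl := G.no_loops heu
    rcases hiu with h | h <;> rcases hiv with h' | h'
    · exact absurd (h.symm.trans h') hx0k
    · exact Or.inl ⟨h, h'⟩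
    · exact Or.inr ⟨h', h⟩
    · exact absurd (h.symm.trans h') hx0k
  -- p has length 1
  have hp1 : p.length = 1 := by
    cases p with
    | nil => simp at hk1
    | @cons _ x1 _ h1 q1 =>
      have hq1 := (Walk.cons_isPath_iff h1 q1).mp hp
      obtain ⟨hne1, l1, hm | hm⟩ := h1
      · have heq1 : (x0, x1, l1) = eu := huu _ hm (Or.inl rfl)
        have hx1 : x1 = xk := by
          rw [← heq1] at hends
          simp only at hends
          rcases hends with ⟨_, h⟩ | ⟨h, _⟩
          · exact h
          · exact absurd h hx0k
        subst hx1
        cases q1 with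
        | nil => rfl
        | @cons _ z _ h' r' =>
          have := (Walk.cons_isPath_iff h' r').mp hq1.1
          exact absurd r'.end_mem_support this.2
      · have heq1 : (x1, x0, l1) = eu := huu _ hm (Or.inr rfl)
        have hx1 : x1 = xk := by
          rw [← heq1] at hends
          simp only at hends
          rcases hends with ⟨h, h'⟩ | ⟨h, _⟩
          · exact absurd h' hx0k
          · exact h
        subst hx1
        cases q1 with
        | nil => rfl
        | @cons _ z _ h' r' =>
          have := (Walk.cons_isPath_iff h' r').mp hq1.1
          exact absurd r'.end_mem_support this.2
  -- a second edge exists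
  obtain ⟨g, hgmem, hgne⟩ : ∃ g ∈ G.edges, g ≠ eu := by
    by_contra hall
    push_neg at hall
    have hsub : G.edges ⊆ {eu} := fun g hg => hall g hg
    have := Set.ncard_le_ncard hsub (Set.finite_singleton _)
    rw [Set.ncard_singleton] at this
    omega
  obtain ⟨a, b, lg⟩ := g
  have hg0 : ¬ IncV (a, b, lg) x0 := fun h => hgne (huu _ hgmem h)
  have hgk : ¬ IncV (a, b, lg) xk := fun h => hgne (hvv _ hgmem h)
  have ha0 : a ≠ x0 := fun h => hg0 (Or.inl h)
  have hak : a ≠ xk := fun h => hgk (Or.inl h)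
  have haV : a ∈ G.verts := (G.edges_sub hgmem).1
  have hx0V : x0 ∈ G.verts := by
    rcases hiu with h | h
    · exact h ▸ (G.edges_sub heu).1
    · exact h ▸ (G.edges_sub heu).2
  obtain ⟨w⟩ := rtg_walk G (subset_refl G.edges) (hconn a haV x0 hx0V)
  obtain ⟨q, hq⟩ : ∃ q : (sgOn G.edges).Walk x0 a, q.IsPath :=
    ⟨w.bypass.reverse, (Walk.bypass_isPath w).reverse⟩
  cases q with
  | nil => exact ha0 rfl
  | @cons _ z _ h2' r =>
    have hqpath := (Walk.cons_isPath_iff h2' r).mp hq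
    have hz : z = xk := by
      obtain ⟨hnez, l2, hm2 | hm2⟩ := h2'
      · have heq2 : (x0, z, l2) = eu := huu _ hm2 (Or.inl rfl)
        rw [← heq2] at hends
        simp only at hends
        rcases hends with ⟨_, h⟩ | ⟨h, _⟩
        · exact h
        · exact absurd h hx0k
      · have heq2 : (z, x0, l2) = eu := huu _ hm2 (Or.inr rfl)
        rw [← heq2] at hends
        simp only at hends
        rcases hends with ⟨h, h'⟩ | ⟨h, _⟩
        · exact absurd h' hx0k
        · exact h
    subst hz
    cases r with
    | nil => exact hak rfl
    | @cons _ d _ h3 r3 =>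
      have := hmax _ hq
      rw [hp1] at this
      simp [Walk.length_cons] at this

end LabeledGraph

end DecompAux

/-- Every connected labeled graph of finite size at least 2 is
decomposable: it has two distinct elements (vertex labels or labeled edges) such that
removing either one, together with any vertex thereby left isolated, yields a connected
labeled graph of size one less. -/
theorem connected_labeledGraph_decomposable {V SV SE : Type*}
    (G : LabeledGraph V SV SE)
    (hL : G.labels.Finite) (hE : G.edges.Finite)
    (hsize : 2 ≤ G.size) (hconn : G.ConnectedGraph) :
    ∃ e₁ e₂ : GraphElement V SV SE, e₁ ≠ e₂ ∧
      G.HasElement e₁ ∧ G.HasElement e₂ ∧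
      ((G.removeElement e₁).ConnectedGraph ∧ (G.removeElement e₁).size + 1 = G.size) ∧
      ((G.removeElement e₂).ConnectedGraph ∧ (G.removeElement e₂).size + 1 = G.size) := by
  classical
  by_cases h2L : 2 ≤ G.labels.ncard
  · obtain ⟨p, q, hp, hq, hpq⟩ := (Set.one_lt_ncard_iff hL).mp h2L
    exact ⟨Sum.inl p, Sum.inl q, fun h => hpq (Sum.inl.inj h), hp, hq,
      ⟨LabeledGraph.good_label G hconn p, LabeledGraph.size_remove G hL hE hp⟩,
      ⟨LabeledGraph.good_label G hconn q, LabeledGraph.size_remove G hL hE hq⟩⟩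
  · push_neg at h2L
    have hsize' : G.size = G.labels.ncard + G.edges.ncard := rfl
    have hEne : G.edges.Nonempty := by
      rw [Set.nonempty_iff_ne_empty]
      intro h
      have h0 : G.edges.ncard = 0 := by rw [h]; exact Set.ncard_empty _
      omega
    rcases LabeledGraph.exists_structure G hE hEne hconn with ⟨e, he, hnb⟩ |
      ⟨u, v, eu, ev, huv, hpu, hpv, hclause⟩
    · obtain ⟨f, hf, hfe, hnbf⟩ := LabeledGraph.nonbridge_pair G he hnb
      exact ⟨Sum.inr e, Sum.inr f, fun h => hfe (Sum.inr.inj h).symm, he, hf,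
        ⟨LabeledGraph.good_nonbridge G hconn hnb, LabeledGraph.size_remove G hL hE he⟩,
        ⟨LabeledGraph.good_nonbridge G hconn hnbf, LabeledGraph.size_remove G hL hE hf⟩⟩
    · rcases Nat.lt_or_ge G.labels.ncard 1 with h0 | h1
      · have hlempty : G.labels = ∅ := (Set.ncard_eq_zero hL).mp (Nat.lt_one_iff.mp h0)
        have hnl : ∀ (x : V) (l : SV), (x, l) ∉ G.labels := by simp [hlempty]
        have h2 : 2 ≤ G.edges.ncard := by
          have h0' : G.labels.ncard = 0 := by simp [hlempty]
          omega
        have hne := hclause h2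
        exact ⟨Sum.inr eu, Sum.inr ev, fun h => hne (Sum.inr.inj h), hpu.1, hpv.1,
          ⟨LabeledGraph.good_pendant G hconn hpu (hnl u), LabeledGraph.size_remove G hL hE hpu.1⟩,
          ⟨LabeledGraph.good_pendant G hconn hpv (hnl v), LabeledGraph.size_remove G hL hE hpv.1⟩⟩
      · have h1' : G.labels.ncard = 1 := le_antisymm (by omega) h1
        obtain ⟨pl, hpl⟩ := Set.ncard_eq_one.mp h1'
        have hcases : ∃ z ez, G.PendAt z ez ∧ ∀ l, (z, l) ∉ G.labels := by
          by_cases hzu : pl.1 = u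
          · refine ⟨v, ev, hpv, ?_⟩
            intro l hl
            rw [hpl, Set.mem_singleton_iff] at hl
            exact huv (((congrArg Prod.fst hl).trans hzu).symm)
          · refine ⟨u, eu, hpu, ?_⟩
            intro l hl
            rw [hpl, Set.mem_singleton_iff] at hl
            exact hzu ((congrArg Prod.fst hl).symm)
        obtain ⟨z, ez, hpz, hnlz⟩ := hcases
        have hplmem : pl ∈ G.labels := by rw [hpl]; rfl
        exact ⟨Sum.inl pl, Sum.inr ez, by simp, hplmem, hpz.1,
          ⟨LabeledGraph.good_label G hconn pl, LabeledGraph.size_remove G hL hE hplmem⟩,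
          ⟨LabeledGraph.good_pendant G hconn hpz hnlz, LabeledGraph.size_remove G hL hE hpz.1⟩⟩
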